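/- For every m ≥ 1, r > 0, and all n, k, l₁, l₂ ∈ ℕ with l₁ ≤ n and l₁ + l₂ > 0, there exists a constant C = C(n,k,l₁,l₂,r) > 0 such that for every smooth function f on B̄_r ⊂ ℝ^m that is flat at the origin, ⟨f⟩_{n,k,r} ≤ C · ⟨f⟩_{n−l₁,k,r}^{l₂/(l₁+l₂)} · ⟨f⟩_{n+l₂,k,r}^{l₁/(l₁+l₂)} (interpolation inequality in the derivative index). -/

import Mathlib

open Metric Set

/-- The weighted norm `⟨f⟩_{n,k,r}` on flat functions on the closed ball. -/
noncomputable def flatNorm (m : ℕ) (r : ℝ) (n k : ℕ)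
    (f : EuclideanSpace ℝ (Fin m) → ℝ) : ℝ :=
  ⨆ p : (closedBall (0 : EuclideanSpace ℝ (Fin m)) r \ {0} :
      Set (EuclideanSpace ℝ (Fin m))) × Fin (n + 1),
    ‖(p.1 : EuclideanSpace ℝ (Fin m))‖ ^ (-(k : ℤ)) *
      ‖iteratedFDerivWithin ℝ p.2 f (closedBall 0 r) p.1‖

theorem oneD_interp {φ ψ χ : ℝ → ℝ} {C : ℝ}
    (hφ : ∀ t ∈ Icc (0:ℝ) 1, HasDerivWithinAt φ (ψ t) (Icc (0:ℝ) 1) t)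
    (hψ : ∀ t ∈ Icc (0:ℝ) 1, HasDerivWithinAt ψ (χ t) (Icc (0:ℝ) 1) t)
    (hχ : ∀ t ∈ Icc (0:ℝ) 1, |χ t| ≤ C) :
    |ψ 0| ≤ |φ 1| + |φ 0| + C := by
  have h0 : (0:ℝ) ∈ Icc (0:ℝ) 1 := by constructor <;> norm_num
  have h1 : (1:ℝ) ∈ Icc (0:ℝ) 1 := by constructor <;> norm_num
  have hC : 0 ≤ C := le_trans (abs_nonneg _) (hχ 0 h0)
  have hψb : ∀ t ∈ Icc (0:ℝ) 1, |ψ t - ψ 0| ≤ C := by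
    intro t ht
    have hb := (convex_Icc (0:ℝ) 1).norm_image_sub_le_of_norm_hasDerivWithin_le hψ
      (fun u hu => by simpa [Real.norm_eq_abs] using hχ u hu) h0 ht
    have ht1 : |t - 0| ≤ 1 := by
      rw [sub_zero]; exact abs_le.2 ⟨by linarith [ht.1], ht.2⟩
    have : |ψ t - ψ 0| ≤ C * |t - 0| := by simpa [Real.norm_eq_abs] using hb
    nlinarith [abs_nonneg (t - 0)]
  have hη : ∀ t ∈ Icc (0:ℝ) 1,
      HasDerivWithinAt (fun u => φ u - u * ψ 0) (ψ t - ψ 0) (Icc (0:ℝ) 1) t := by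
    intro t ht
    have := (hφ t ht).sub ((hasDerivWithinAt_id t _).mul_const (ψ 0))
    simp only [one_mul] at this
    exact this
  have hb2 := (convex_Icc (0:ℝ) 1).norm_image_sub_le_of_norm_hasDerivWithin_le hη
      (fun u hu => by simpa [Real.norm_eq_abs] using hψb u hu) h0 h1
  have hb2' : |φ 1 - ψ 0 - φ 0| ≤ C := by
    have : |(φ 1 - 1 * ψ 0) - (φ 0 - 0 * ψ 0)| ≤ C * |(1:ℝ) - 0| := by
      simpa [Real.norm_eq_abs] using hb2
    simpa using this
  have h1' := le_abs_self (φ 1 - ψ 0 - φ 0)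
  have h2' := neg_abs_le (φ 1 - ψ 0 - φ 0)
  rcases abs_cases (ψ 0) with ⟨he, _⟩ | ⟨he, _⟩ <;>
    rcases abs_cases (φ 1) with ⟨h3, _⟩ | ⟨h3, _⟩ <;>
    rcases abs_cases (φ 0) with ⟨h4, _⟩ | ⟨h4, _⟩ <;>
    rcases abs_cases (φ 1 - ψ 0 - φ 0) with ⟨h5, _⟩ | ⟨h5, _⟩ <;> linarith
open Metric Set

variable {E : Type*} [NormedAddCommGroup E] [NormedSpace ℝ E]

theorem uds_cb {r : ℝ} (hr : 0 < r) : UniqueDiffOn ℝ (closedBall (0:E) r) :=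
  uniqueDiffOn_convex (convex_closedBall _ _)
    (by rw [interior_closedBall _ (ne_of_gt hr)]; exact ⟨0, mem_ball_self hr⟩)

theorem derivAlong {f : E → ℝ} {r : ℝ} (hr : 0 < r)
    (hf : ContDiffOn ℝ (⊤:ℕ∞) f (closedBall (0:E) r)) (i : ℕ) (x d : E)
    (hmap : ∀ t ∈ Icc (0:ℝ) 1, x + t • d ∈ closedBall (0:E) r) (w : Fin i → E)
    {t : ℝ} (ht : t ∈ Icc (0:ℝ) 1) :
    HasDerivWithinAt (fun u => iteratedFDerivWithin ℝ i f (closedBall (0:E) r) (x + u • d) w)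
      ((iteratedFDerivWithin ℝ (i+1) f (closedBall (0:E) r) (x + t • d)) (Fin.cons d w))
      (Icc (0:ℝ) 1) t := by
  have hus : UniqueDiffOn ℝ (closedBall (0:E) r) := uds_cb hr
  have hG : DifferentiableOn ℝ (iteratedFDerivWithin ℝ i f (closedBall (0:E) r))
      (closedBall (0:E) r) :=
    hf.differentiableOn_iteratedFDerivWithin (by exact_mod_cast lt_top_iff_ne_top.2 (ENat.coe_ne_top i)) hus
  have hγ : HasDerivWithinAt (fun u : ℝ => x + u • d) d (Icc (0:ℝ) 1) t := by
    simpa using ((hasDerivWithinAt_id t (Icc (0:ℝ) 1)).smul_const d).const_add x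
  have hGat := (hG _ (hmap t ht)).hasFDerivWithinAt
  have hcomp := hGat.comp_hasDerivWithinAt t hγ (fun u hu => hmap u hu)
  have happ := (ContinuousMultilinearMap.apply ℝ (fun _ : Fin i => E) ℝ
    w).hasFDerivAt.comp_hasDerivWithinAt t hcomp
  exact happ
variable {E : Type*} [NormedAddCommGroup E] [InnerProductSpace ℝ E]

theorem segProp {r : ℝ} {x d : E} (hx : x ∈ closedBall (0:E) r)
    (hip : 2 * inner ℝ d x + ‖d‖^2 ≤ (0:ℝ)) :
    ∀ t ∈ Icc (0:ℝ) 1, x + t • d ∈ closedBall (0:E) r ∧ ‖x + t • d‖ ≤ ‖x‖ := by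
  intro t ht
  have hxr : ‖x‖ ≤ r := by simpa [mem_closedBall_zero_iff] using hx
  have hsq : ‖x + t • d‖^2 ≤ ‖x‖^2 := by
    rw [norm_add_sq_real]
    have h1 : inner ℝ x (t • d) = t * (inner ℝ d x : ℝ) := by
      rw [real_inner_smul_right, real_inner_comm]
    have h2 : ‖t • d‖^2 = t^2 * ‖d‖^2 := by
      rw [norm_smul]; simp [Real.norm_eq_abs, mul_pow, sq_abs]
    rw [h1, h2]
    have h3 : t * (2 * inner ℝ d x + ‖d‖^2) ≤ 0 := mul_nonpos_of_nonneg_of_nonpos ht.1 hip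
    have h4 : t^2 * ‖d‖^2 ≤ t * ‖d‖^2 := by nlinarith [mul_nonneg (mul_nonneg ht.1 (sub_nonneg.2 ht.2)) (sq_nonneg ‖d‖)]
    nlinarith
  have hle : ‖x + t • d‖ ≤ ‖x‖ := by
    nlinarith [norm_nonneg (x + t • d), norm_nonneg x]
  exact ⟨by simpa [mem_closedBall_zero_iff] using hle.trans hxr, hle⟩

theorem dirBound {f : E → ℝ} {r : ℝ} (hr : 0 < r)
    (hf : ContDiffOn ℝ (⊤:ℕ∞) f (closedBall (0:E) r)) (k j : ℕ) {a c : ℝ}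
    (ha0 : 0 ≤ a) (hc0 : 0 ≤ c)
    (ha : ∀ y ∈ closedBall (0:E) r,
      ‖iteratedFDerivWithin ℝ j f (closedBall (0:E) r) y‖ ≤ ‖y‖^k * a)
    (hc : ∀ y ∈ closedBall (0:E) r,
      ‖iteratedFDerivWithin ℝ (j+2) f (closedBall (0:E) r) y‖ ≤ ‖y‖^k * c)
    {x d : E}
    (hseg : ∀ t ∈ Icc (0:ℝ) 1, x + t • d ∈ closedBall (0:E) r ∧ ‖x + t • d‖ ≤ ‖x‖)
    (w : Fin j → E) :
    |iteratedFDerivWithin ℝ (j+1) f (closedBall (0:E) r) x (Fin.cons d w)| ≤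
      (2*a + c*‖d‖^2) * ‖x‖^k * ∏ i1, ‖w i1‖ := by
  set s := closedBall (0:E) r with hs
  set P := ∏ i1, ‖w i1‖ with hP
  have hP0 : 0 ≤ P := Finset.prod_nonneg fun _ _ => norm_nonneg _
  have hmap : ∀ t ∈ Icc (0:ℝ) 1, x + t • d ∈ s := fun t ht => (hseg t ht).1
  have hnle : ∀ t ∈ Icc (0:ℝ) 1, ‖x + t • d‖^k ≤ ‖x‖^k := fun t ht =>
    pow_le_pow_left₀ (norm_nonneg _) (hseg t ht).2 k
  have hφ := fun t (ht : t ∈ Icc (0:ℝ) 1) => derivAlong hr hf j x d hmap w ht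
  have hψ := fun t (ht : t ∈ Icc (0:ℝ) 1) => derivAlong hr hf (j+1) x d hmap (Fin.cons d w) ht
  have hχb : ∀ t ∈ Icc (0:ℝ) 1,
      |iteratedFDerivWithin ℝ (j+2) f s (x + t • d) (Fin.cons d (Fin.cons d w))| ≤
        ‖x‖^k * c * (‖d‖^2 * P) := by
    intro t ht
    have h1 : |iteratedFDerivWithin ℝ (j+2) f s (x + t • d) (Fin.cons d (Fin.cons d w))| ≤
        ‖iteratedFDerivWithin ℝ (j+2) f s (x + t • d)‖ * ∏ i1, ‖(Fin.cons d (Fin.cons d w) : Fin (j+2) → E) i1‖ := by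
      simpa [Real.norm_eq_abs] using
        (iteratedFDerivWithin ℝ (j+2) f s (x + t • d)).le_opNorm (Fin.cons d (Fin.cons d w))
    have h2 : (∏ i1, ‖(Fin.cons d (Fin.cons d w) : Fin (j+2) → E) i1‖) = ‖d‖^2 * P := by
      simp [Fin.prod_univ_succ, hP]; ring
    have h3 : ‖iteratedFDerivWithin ℝ (j+2) f s (x + t • d)‖ ≤ ‖x‖^k * c :=
      (hc _ (hmap t ht)).trans (mul_le_mul_of_nonneg_right (hnle t ht) hc0)
    calc |iteratedFDerivWithin ℝ (j+2) f s (x + t • d) (Fin.cons d (Fin.cons d w))|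
        ≤ ‖iteratedFDerivWithin ℝ (j+2) f s (x + t • d)‖ * (‖d‖^2 * P) := by rw [h2] at h1; exact h1
      _ ≤ ‖x‖^k * c * (‖d‖^2 * P) := by
          apply mul_le_mul_of_nonneg_right h3 (by positivity)
  have hφb : ∀ t ∈ Icc (0:ℝ) 1,
      |iteratedFDerivWithin ℝ j f s (x + t • d) w| ≤ ‖x‖^k * a * P := by
    intro t ht
    have h1 : |iteratedFDerivWithin ℝ j f s (x + t • d) w| ≤
        ‖iteratedFDerivWithin ℝ j f s (x + t • d)‖ * P := by
      simpa [Real.norm_eq_abs, hP] using (iteratedFDerivWithin ℝ j f s (x + t • d)).le_opNorm w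
    have h3 : ‖iteratedFDerivWithin ℝ j f s (x + t • d)‖ ≤ ‖x‖^k * a :=
      (ha _ (hmap t ht)).trans (mul_le_mul_of_nonneg_right (hnle t ht) ha0)
    exact h1.trans (mul_le_mul_of_nonneg_right h3 hP0)
  have h0 : (0:ℝ) ∈ Icc (0:ℝ) 1 := by constructor <;> norm_num
  have h1 : (1:ℝ) ∈ Icc (0:ℝ) 1 := by constructor <;> norm_num
  have key := oneD_interp hφ hψ hχb
  have e0 : x + (0:ℝ) • d = x := by simp
  rw [e0] at key
  calc |iteratedFDerivWithin ℝ (j+1) f s x (Fin.cons d w)| ≤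
      |iteratedFDerivWithin ℝ j f s (x + (1:ℝ) • d) w| +
      |iteratedFDerivWithin ℝ j f s x w| + ‖x‖^k * c * (‖d‖^2 * P) := by
        have := hφb 0 h0; rw [e0] at this; exact key
    _ ≤ ‖x‖^k * a * P + ‖x‖^k * a * P + ‖x‖^k * c * (‖d‖^2 * P) := by
        have hb0 := hφb 0 h0; rw [e0] at hb0
        have hb1 := hφb 1 h1
        linarith
    _ = (2*a + c*‖d‖^2) * ‖x‖^k * P := by ring

theorem consSmul {j : ℕ} (T : ContinuousMultilinearMap ℝ (fun _ : Fin (j+1) => E) ℝ)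
    (w : Fin j → E) (c : ℝ) (z : E) :
    T (Fin.cons (c • z) w) = c * T (Fin.cons z w) := by
  have := T.map_update_smul (Fin.cons z w) 0 c z
  simpa [Fin.update_cons_zero] using this

theorem consSub {j : ℕ} (T : ContinuousMultilinearMap ℝ (fun _ : Fin (j+1) => E) ℝ)
    (w : Fin j → E) (z1 z2 : E) :
    T (Fin.cons (z1 - z2) w) = T (Fin.cons z1 w) - T (Fin.cons z2 w) := by
  have := T.map_update_sub (Fin.cons z1 w) 0 z1 z2
  simpa [Fin.update_cons_zero] using this

set_option maxHeartbeats 1000000 in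
theorem pointBound {f : E → ℝ} {r : ℝ} (hr : 0 < r)
    (hf : ContDiffOn ℝ (⊤:ℕ∞) f (closedBall (0:E) r)) (k j : ℕ) {a c : ℝ}
    (ha0 : 0 ≤ a) (hc0 : 0 ≤ c)
    (ha : ∀ y ∈ closedBall (0:E) r,
      ‖iteratedFDerivWithin ℝ j f (closedBall (0:E) r) y‖ ≤ ‖y‖^k * a)
    (hc : ∀ y ∈ closedBall (0:E) r,
      ‖iteratedFDerivWithin ℝ (j+2) f (closedBall (0:E) r) y‖ ≤ ‖y‖^k * c)
    {x : E} (hx : x ∈ closedBall (0:E) r) {h : ℝ} (hh0 : 0 < h) (hhx : h ≤ ‖x‖) :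
    ‖iteratedFDerivWithin ℝ (j+1) f (closedBall (0:E) r) x‖ ≤
      (6*a/h + 3*(h*c)) * ‖x‖^k := by
  set s := closedBall (0:E) r with hs
  have hxn : 0 < ‖x‖ := lt_of_lt_of_le hh0 hhx
  have hbnd0 : 0 ≤ (6*a/h + 3*(h*c)) * ‖x‖^k := by positivity
  apply ContinuousMultilinearMap.opNorm_le_bound hbnd0
  intro v
  set T := iteratedFDerivWithin ℝ (j+1) f s x with hT
  set v0 := v 0 with hv0def
  set w := Fin.tail v with hwdef
  have hvcons : v = Fin.cons v0 w := (Fin.cons_self_tail v).symm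
  have hprod : (∏ i1, ‖v i1‖) = ‖v0‖ * ∏ i1, ‖w i1‖ := by
    rw [Fin.prod_univ_succ]; rfl
  set P := ∏ i1, ‖w i1‖ with hP
  have hP0 : 0 ≤ P := Finset.prod_nonneg fun _ _ => norm_nonneg _
  by_cases hv00 : v0 = 0
  · have : T v = 0 := by
      rw [hvcons, hv00]
      exact T.map_coord_zero 0 (by simp)
    rw [this, hprod, hv00]
    simp [hbnd0]
  -- main case
  have hv0n : 0 < ‖v0‖ := norm_pos_iff.2 hv00
  set σ : ℝ := if (inner ℝ v0 x : ℝ) ≤ 0 then 1 else -1 with hσdef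
  have hσsq : σ * σ = 1 := by
    rcases ite_eq_or_eq ((inner ℝ v0 x : ℝ) ≤ 0) (1:ℝ) (-1) with h' | h' <;> rw [hσdef, h'] <;> norm_num
  have hσabs : |σ| = 1 := by
    rcases ite_eq_or_eq ((inner ℝ v0 x : ℝ) ≤ 0) (1:ℝ) (-1) with h' | h' <;> rw [hσdef, h'] <;> norm_num
  set v' := σ • v0 with hv'def
  have hv'n : ‖v'‖ = ‖v0‖ := by
    rw [hv'def, norm_smul, Real.norm_eq_abs, hσabs, one_mul]
  have hv'x : (inner ℝ v' x : ℝ) ≤ 0 := by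
    rw [hv'def, real_inner_smul_left]
    by_cases hip : (inner ℝ v0 x : ℝ) ≤ 0
    · simp only [hσdef, if_pos hip]; linarith
    · simp only [hσdef, if_neg hip]; push_neg at hip; nlinarith
  set e0 : E := -(‖x‖⁻¹) • x with he0def
  have hne0 : ‖e0‖ = 1 := by
    rw [he0def, norm_smul, Real.norm_eq_abs, abs_neg, abs_inv, abs_of_pos hxn]
    field_simp
  have he0x : (inner ℝ e0 x : ℝ) = -‖x‖ := by
    rw [he0def, real_inner_smul_left, real_inner_self_eq_norm_sq]
    field_simp
  set du : E := (h/(2*‖v0‖)) • (v' + ‖v0‖ • e0) with hdudef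
  set de : E := h • e0 with hdedef
  have hden : ‖de‖ = h := by
    rw [hdedef, norm_smul, Real.norm_eq_abs, abs_of_pos hh0, hne0, mul_one]
  have hdex : (inner ℝ de x : ℝ) = -(h * ‖x‖) := by
    rw [hdedef, real_inner_smul_left, he0x]; ring
  have hdun : ‖du‖ ≤ h := by
    rw [hdudef, norm_smul, Real.norm_eq_abs, abs_of_pos (by positivity)]
    have h1 : ‖v' + ‖v0‖ • e0‖ ≤ 2 * ‖v0‖ := by
      calc ‖v' + ‖v0‖ • e0‖ ≤ ‖v'‖ + ‖‖v0‖ • e0‖ := norm_add_le _ _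
        _ = 2 * ‖v0‖ := by
            rw [hv'n, norm_smul, Real.norm_eq_abs, abs_of_pos hv0n, hne0]; ring
    calc h/(2*‖v0‖) * ‖v' + ‖v0‖ • e0‖ ≤ h/(2*‖v0‖) * (2*‖v0‖) :=
          mul_le_mul_of_nonneg_left h1 (by positivity)
      _ = h := by field_simp
  have hdux : (inner ℝ du x : ℝ) ≤ -(h/2 * ‖x‖) := by
    have g1 : (inner ℝ du x : ℝ) = (h/(2*‖v0‖)) * (inner ℝ (v' + ‖v0‖ • e0) x : ℝ) :=
      real_inner_smul_left _ _ _
    have g2 : (inner ℝ (v' + ‖v0‖ • e0) x : ℝ) = (inner ℝ v' x : ℝ) + (inner ℝ (‖v0‖ • e0) x : ℝ) :=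
      inner_add_left _ _ _
    have g3 : (inner ℝ (‖v0‖ • e0) x : ℝ) = ‖v0‖ * (inner ℝ e0 x : ℝ) := real_inner_smul_left _ _ _
    rw [g1, g2, g3, he0x]
    have hstep : (inner ℝ v' x : ℝ) + ‖v0‖ * -‖x‖ ≤ -(‖v0‖ * ‖x‖) := by linarith
    calc h/(2*‖v0‖) * ((inner ℝ v' x : ℝ) + ‖v0‖ * -‖x‖) ≤ h/(2*‖v0‖) * -(‖v0‖ * ‖x‖) :=
          mul_le_mul_of_nonneg_left hstep (by positivity)
      _ = -(h/2 * ‖x‖) := by field_simp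
  -- segment conditions
  have hsege : ∀ t ∈ Icc (0:ℝ) 1, x + t • de ∈ s ∧ ‖x + t • de‖ ≤ ‖x‖ := by
    apply segProp hx
    rw [hdex, hden]
    nlinarith
  have hsegu : ∀ t ∈ Icc (0:ℝ) 1, x + t • du ∈ s ∧ ‖x + t • du‖ ≤ ‖x‖ := by
    apply segProp hx
    nlinarith [sq_nonneg ‖du‖, pow_le_pow_left₀ (norm_nonneg du) hdun 2]
  -- directional bounds
  have Hu := dirBound hr hf k j ha0 hc0 ha hc hsegu w
  have He := dirBound hr hf k j ha0 hc0 ha hc hsege w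
  rw [← hT] at Hu He
  -- decomposition: v0 = σ • ((2‖v0‖/h) • du - (‖v0‖/h) • de)
  have hdecomp : v0 = σ • ((2*‖v0‖/h) • du - (‖v0‖/h) • de) := by
    have h1 : (2*‖v0‖/h) • du = v' + ‖v0‖ • e0 := by
      rw [hdudef, smul_smul]
      rw [show 2*‖v0‖/h * (h/(2*‖v0‖)) = 1 by field_simp]
      rw [one_smul]
    have h2 : (‖v0‖/h) • de = ‖v0‖ • e0 := by
      rw [hdedef, smul_smul]
      rw [show ‖v0‖/h * h = ‖v0‖ by field_simp]
    rw [h1, h2, add_sub_cancel_right, hv'def, smul_smul, hσsq, one_smul]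
  have hTval : T v = σ * ((2*‖v0‖/h) * T (Fin.cons du w) - (‖v0‖/h) * T (Fin.cons de w)) := by
    have e2 : T (Fin.cons ((2*‖v0‖/h) • du - (‖v0‖/h) • de) w) =
        (2*‖v0‖/h) * T (Fin.cons du w) - (‖v0‖/h) * T (Fin.cons de w) := by
      rw [consSub T w ((2*‖v0‖/h) • du) ((‖v0‖/h) • de), consSmul T w (2*‖v0‖/h) du,
        consSmul T w (‖v0‖/h) de]
    conv_lhs => rw [hvcons, hdecomp]
    rw [consSmul T w σ ((2*‖v0‖/h) • du - (‖v0‖/h) • de), e2]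
  rw [← hP] at Hu He
  have hTu : |T (Fin.cons du w)| ≤ (2*a + c*h^2) * ‖x‖^k * P := by
    refine Hu.trans ?_
    have h5 : c * ‖du‖^2 ≤ c * h^2 := by
      apply mul_le_mul_of_nonneg_left _ hc0
      exact pow_le_pow_left₀ (norm_nonneg du) hdun 2
    have hx0 : (0:ℝ) ≤ ‖x‖^k := by positivity
    apply mul_le_mul_of_nonneg_right _ hP0
    apply mul_le_mul_of_nonneg_right _ hx0
    linarith
  have hTe : |T (Fin.cons de w)| ≤ (2*a + c*h^2) * ‖x‖^k * P := by
    refine He.trans ?_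
    rw [hden]
  have habs : |T v| ≤ (3*‖v0‖/h) * ((2*a + c*h^2) * ‖x‖^k * P) := by
    rw [hTval, abs_mul, hσabs, one_mul]
    calc |(2*‖v0‖/h) * T (Fin.cons du w) - (‖v0‖/h) * T (Fin.cons de w)|
        ≤ |(2*‖v0‖/h) * T (Fin.cons du w)| + |(‖v0‖/h) * T (Fin.cons de w)| := abs_sub _ _
      _ = (2*‖v0‖/h) * |T (Fin.cons du w)| + (‖v0‖/h) * |T (Fin.cons de w)| := by
          rw [abs_mul, abs_mul, abs_of_pos (by positivity : (0:ℝ) < 2*‖v0‖/h),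
            abs_of_pos (by positivity : (0:ℝ) < ‖v0‖/h)]
      _ ≤ (2*‖v0‖/h) * ((2*a + c*h^2) * ‖x‖^k * P) + (‖v0‖/h) * ((2*a + c*h^2) * ‖x‖^k * P) := by
          have g1 := mul_le_mul_of_nonneg_left hTu (le_of_lt (by positivity : (0:ℝ) < 2*‖v0‖/h))
          have g2 := mul_le_mul_of_nonneg_left hTe (le_of_lt (by positivity : (0:ℝ) < ‖v0‖/h))
          linarith
      _ = (3*‖v0‖/h) * ((2*a + c*h^2) * ‖x‖^k * P) := by ring
  rw [Real.norm_eq_abs, hprod]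
  refine habs.trans (le_of_eq ?_)
  field_simp
  ring

theorem meanValueZero {f : E → ℝ} {r : ℝ} (hr : 0 < r)
    (hf : ContDiffOn ℝ (⊤:ℕ∞) f (closedBall (0:E) r)) (j : ℕ)
    (hflat : iteratedFDerivWithin ℝ j f (closedBall (0:E) r) 0 = 0)
    {Q : ℝ} {x : E} (hx : x ∈ closedBall (0:E) r)
    (hQ : ∀ y ∈ closedBall (0:E) r, ‖y‖ ≤ ‖x‖ →
      ‖iteratedFDerivWithin ℝ (j+1) f (closedBall (0:E) r) y‖ ≤ Q) :
    ‖iteratedFDerivWithin ℝ j f (closedBall (0:E) r) x‖ ≤ Q * ‖x‖ := by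
  set s := closedBall (0:E) r with hs
  have hus : UniqueDiffOn ℝ s := uds_cb hr
  have h0s : (0:E) ∈ s := by simp [hs, le_of_lt hr]
  have hseg : segment ℝ (0:E) x ⊆ s := (convex_closedBall _ _).segment_subset h0s hx
  have hG : DifferentiableOn ℝ (iteratedFDerivWithin ℝ j f s) s :=
    hf.differentiableOn_iteratedFDerivWithin
      (by exact_mod_cast lt_top_iff_ne_top.2 (ENat.coe_ne_top j)) hus
  have hderiv : ∀ y ∈ segment ℝ (0:E) x,
      HasFDerivWithinAt (iteratedFDerivWithin ℝ j f s)
        (fderivWithin ℝ (iteratedFDerivWithin ℝ j f s) s y) (segment ℝ (0:E) x) y :=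
    fun y hy => ((hG y (hseg hy)).hasFDerivWithinAt).mono hseg
  have hbound : ∀ y ∈ segment ℝ (0:E) x,
      ‖fderivWithin ℝ (iteratedFDerivWithin ℝ j f s) s y‖ ≤ Q := by
    intro y hy
    rw [norm_fderivWithin_iteratedFDerivWithin]
    rcases hy with ⟨t1, t2, ht1, ht2, hsum, rfl⟩
    have : ‖t1 • (0:E) + t2 • x‖ ≤ ‖x‖ := by
      rw [smul_zero, zero_add, norm_smul, Real.norm_eq_abs, abs_of_nonneg ht2]
      nlinarith [norm_nonneg x]
    exact hQ _ (hseg ⟨t1, t2, ht1, ht2, hsum, rfl⟩) this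
  have := (convex_segment (0:E) x).norm_image_sub_le_of_norm_hasFDerivWithin_le
    hderiv hbound (left_mem_segment ℝ (0:E) x) (right_mem_segment ℝ (0:E) x)
  simpa [hflat] using this

theorem convexSeq (d : ℕ → ℝ) (p q s : ℕ) (hpq : p ≤ q) (hqs : q ≤ s)
    (hconv : ∀ j, p ≤ j → j + 2 ≤ s → 2 * d (j+1) ≤ d j + d (j+2)) :
    ((s:ℝ) - p) * d q ≤ ((s:ℝ) - q) * d p + ((q:ℝ) - p) * d s := by
  rcases eq_or_lt_of_le hpq with rfl | hpq'
  · linarith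
  rcases eq_or_lt_of_le hqs with rfl | hqs'
  · linarith
  set e : ℕ → ℝ := fun i => d (i+1) - d i with he
  have hmono : ∀ i j, p ≤ i → i ≤ j → j + 1 ≤ s → e i ≤ e j := by
    intro i j hpi hij hjs
    induction j, hij using Nat.le_induction with
    | base => exact le_rfl
    | succ j hij ih =>
      have h1 : e j ≤ e (j+1) := by
        have := hconv j (le_trans hpi hij) (by omega)
        simp only [he]
        linarith
      exact le_trans (ih (by omega)) h1
  have tele : ∀ b t : ℕ, (∑ i ∈ Finset.range t, e (b+i)) = d (b+t) - d b := by
    intro b t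
    induction t with
    | zero => simp
    | succ t ih =>
      rw [Finset.sum_range_succ, ih]
      simp only [he]
      rw [show b + (t+1) = (b + t) + 1 by omega]
      ring
  have tq := tele p (q-p)
  rw [show p + (q - p) = q by omega] at tq
  have ts := tele q (s-q)
  rw [show q + (s - q) = s by omega] at ts
  have hup : d q - d p ≤ ((q - p : ℕ) : ℝ) * e (q-1) := by
    rw [← tq]
    calc (∑ i ∈ Finset.range (q-p), e (p+i)) ≤ ∑ _i ∈ Finset.range (q-p), e (q-1) := by
          apply Finset.sum_le_sum
          intro i hi
          have hi' := Finset.mem_range.1 hi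
          exact hmono (p+i) (q-1) (by omega) (by omega) (by omega)
      _ = ((q - p : ℕ) : ℝ) * e (q-1) := by
          rw [Finset.sum_const, Finset.card_range, nsmul_eq_mul]
  have hlow : ((s - q : ℕ) : ℝ) * e q ≤ d s - d q := by
    rw [← ts]
    calc ((s - q : ℕ) : ℝ) * e q = ∑ _i ∈ Finset.range (s-q), e q := by
          rw [Finset.sum_const, Finset.card_range, nsmul_eq_mul]
      _ ≤ ∑ i ∈ Finset.range (s-q), e (q+i) := by
          apply Finset.sum_le_sum
          intro i hi
          have hi' := Finset.mem_range.1 hi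
          exact hmono q (q+i) (by omega) (by omega) (by omega)
  have hee : e (q-1) ≤ e q := hmono (q-1) q (by omega) (by omega) (by omega)
  have hc1 : ((q - p : ℕ) : ℝ) = (q:ℝ) - p := by
    rw [Nat.cast_sub hpq]
  have hc2 : ((s - q : ℕ) : ℝ) = (s:ℝ) - q := by
    rw [Nat.cast_sub hqs]
  rw [hc1] at hup
  rw [hc2] at hlow
  have ht1 : (0:ℝ) ≤ (q:ℝ) - p := by
    have := Nat.cast_le (α := ℝ).2 hpq
    linarith
  have ht2 : (0:ℝ) ≤ (s:ℝ) - q := by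
    have := Nat.cast_le (α := ℝ).2 hqs
    linarith
  have k1 : ((s:ℝ) - q) * (d q - d p) ≤ ((s:ℝ) - q) * (((q:ℝ) - p) * e (q-1)) :=
    mul_le_mul_of_nonneg_left hup ht2
  have k2 : (((q:ℝ) - p) * ((s:ℝ) - q)) * e (q-1) ≤ (((q:ℝ) - p) * ((s:ℝ) - q)) * e q :=
    mul_le_mul_of_nonneg_left hee (mul_nonneg ht1 ht2)
  have k3 : ((q:ℝ) - p) * (((s:ℝ) - q) * e q) ≤ ((q:ℝ) - p) * (d s - d q) :=
    mul_le_mul_of_nonneg_left hlow ht1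
  nlinarith [k1, k2, k3]


set_option maxHeartbeats 2000000 in
/-- interpolation inequality in the derivative index: for `l₁ ≤ n`,
`l₁ + l₂ > 0`, there is `C > 0` with
`⟨f⟩_{n,k,r} ≤ C ⟨f⟩_{n−l₁,k,r}^{l₂/(l₁+l₂)} ⟨f⟩_{n+l₂,k,r}^{l₁/(l₁+l₂)}`
for every smooth `f` on `B̄_r` flat at the origin. -/
theorem interpolation_derivatives (m : ℕ) (hm : 1 ≤ m) (r : ℝ) (hr : 0 < r)
    (n k l₁ l₂ : ℕ) (hl₁ : l₁ ≤ n) (hl : 0 < l₁ + l₂) :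
    ∃ C > (0 : ℝ), ∀ f : EuclideanSpace ℝ (Fin m) → ℝ,
      ContDiffOn ℝ (⊤ : ℕ∞) f (closedBall 0 r) →
      (∀ i : ℕ, iteratedFDerivWithin ℝ i f (closedBall 0 r) 0 = 0) →
      flatNorm m r n k f ≤
        C * flatNorm m r (n - l₁) k f ^ ((l₂ : ℝ) / ((l₁ : ℝ) + (l₂ : ℝ))) *
          flatNorm m r (n + l₂) k f ^ ((l₁ : ℝ) / ((l₁ : ℝ) + (l₂ : ℝ))) := by
  classical
  -- degenerate cases
  rcases Nat.eq_zero_or_pos l₁ with hl10 | hl1pos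
  · subst hl10
    refine ⟨1, one_pos, ?_⟩
    intro f _ _
    have hl2 : (0:ℝ) < l₂ := by exact_mod_cast (by omega : 0 < l₂)
    rw [Nat.sub_zero]
    rw [show (l₂:ℝ) / ((0:ℕ) + (l₂:ℝ)) = 1 by push_cast; field_simp; ring]
    rw [show ((0:ℕ):ℝ) / (((0:ℕ):ℝ) + (l₂:ℝ)) = 0 by push_cast; field_simp; ring]
    rw [Real.rpow_one, Real.rpow_zero, one_mul, mul_one]
  rcases Nat.eq_zero_or_pos l₂ with hl20 | hl2pos
  · subst hl20
    refine ⟨1, one_pos, ?_⟩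
    intro f _ _
    have hl1 : (0:ℝ) < l₁ := by exact_mod_cast (by omega : 0 < l₁)
    rw [Nat.add_zero]
    rw [show ((0:ℕ):ℝ) / ((l₁:ℝ) + ((0:ℕ):ℝ)) = 0 by push_cast; field_simp; ring]
    rw [show (l₁:ℝ) / ((l₁:ℝ) + ((0:ℕ):ℝ)) = 1 by push_cast; field_simp; ring]
    rw [Real.rpow_one, Real.rpow_zero, one_mul, one_mul]
  -- main case
  set E := EuclideanSpace ℝ (Fin m)
  set s : Set E := closedBall (0:E) r with hsdef
  have hus : UniqueDiffOn ℝ s := uds_cb hr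
  have hL9 : (0:ℝ) ≤ Real.log 9 := Real.log_nonneg (by norm_num)
  refine ⟨(max 1 r)^n * Real.exp (Real.log 9 * (l₁*l₂)), by positivity, ?_⟩
  intro f hf hflat
  set D := fun (j : ℕ) => iteratedFDerivWithin ℝ j f s with hD
  -- a base point
  have hm0 : (0:ℕ) < m := hm
  set x₀ : E := r • EuclideanSpace.single (⟨0, hm0⟩ : Fin m) (1:ℝ) with hx₀
  have hx₀n : ‖x₀‖ = r := by
    rw [hx₀, norm_smul, EuclideanSpace.norm_single, Real.norm_eq_abs, abs_of_pos hr]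
    norm_num
  have hx₀mem : x₀ ∈ s \ {0} := by
    constructor
    · rw [hsdef, mem_closedBall_zero_iff, hx₀n]
    · simp only [mem_singleton_iff]
      intro h0
      rw [h0] at hx₀n
      simp at hx₀n
      exact (ne_of_gt hr) hx₀n.symm
  haveI hne : Nonempty ↥(s \ {0}) := ⟨⟨x₀, hx₀mem⟩⟩
  -- global bounds
  have hS : ∀ i : ℕ, ∃ Si : ℝ, 0 ≤ Si ∧ ∀ x ∈ s, ‖D i x‖ ≤ Si := by
    intro i
    obtain ⟨Si, hSi⟩ := (isCompact_closedBall (0:E) r).exists_bound_of_continuousOn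
      (hf.continuousOn_iteratedFDerivWithin (by exact_mod_cast (le_top : (i:ℕ∞) ≤ ⊤)) hus)
    exact ⟨max Si 0, le_max_right _ _, fun x hx => (hSi x hx).trans (le_max_left _ _)⟩
  choose S hS0 hSb using hS
  have hgrow : ∀ i j : ℕ, ∀ x ∈ s, ‖D j x‖ ≤ S (j+i) * ‖x‖^i := by
    intro i
    induction i with
    | zero => intro j x hx; simpa using hSb j x hx
    | succ i ih =>
      intro j x hx
      have hQ : ∀ y ∈ s, ‖y‖ ≤ ‖x‖ → ‖D (j+1) y‖ ≤ S (j+1+i) * ‖x‖^i := fun y hy hyx =>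
        (ih (j+1) y hy).trans
          (mul_le_mul_of_nonneg_left (pow_le_pow_left₀ (norm_nonneg _) hyx i) (hS0 _))
      have hmv := meanValueZero hr hf j (hflat j) hx hQ
      calc ‖D j x‖ ≤ S (j+1+i) * ‖x‖^i * ‖x‖ := hmv
        _ = S (j+(i+1)) * ‖x‖^(i+1) := by rw [show j+1+i = j+(i+1) by omega]; ring
  -- the single-order weighted sups
  set term : ℕ → ↥(s \ {0}) → ℝ :=
    fun j y => ‖(y:E)‖ ^ (-(k:ℤ)) * ‖D j y‖ with hterm
  have hymem : ∀ y : ↥(s \ {0}), (y:E) ∈ s ∧ (0:ℝ) < ‖(y:E)‖ := by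
    intro y
    refine ⟨y.2.1, ?_⟩
    have : (y:E) ≠ 0 := by
      have := y.2.2; simpa [mem_singleton_iff] using this
    exact norm_pos_iff.2 this
  have hzpow : ∀ y : ↥(s \ {0}), ‖(y:E)‖ ^ (-(k:ℤ)) = (‖(y:E)‖^k)⁻¹ := by
    intro y
    rw [zpow_neg, zpow_natCast]
  have hterm_nonneg : ∀ j y, 0 ≤ term j y := by
    intro j y
    rw [hterm]
    have := (hymem y).2
    positivity
  have hterm_le : ∀ j y, term j y ≤ S (j+k) := by
    intro j y
    rw [hterm]
    simp only
    rw [hzpow y]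
    rw [inv_mul_le_iff₀ (pow_pos (hymem y).2 k)]
    calc ‖D j y‖ ≤ S (j+k) * ‖(y:E)‖^k := hgrow k j _ (hymem y).1
      _ = ‖(y:E)‖^k * S (j+k) := by ring
  set M : ℕ → ℝ := fun j => ⨆ y, term j y with hM
  have hbdd : ∀ j, BddAbove (Set.range (term j)) := by
    intro j
    exact ⟨S (j+k), fun z ⟨y, hy⟩ => hy ▸ hterm_le j y⟩
  have hMge : ∀ j y, term j y ≤ M j := fun j y => le_ciSup (hbdd j) y
  have hMle : ∀ j (Q : ℝ), (∀ y, term j y ≤ Q) → M j ≤ Q := fun j Q hQ => ciSup_le hQ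
  have hM0 : ∀ j, 0 ≤ M j := fun j =>
    le_trans (hterm_nonneg j ⟨x₀, hx₀mem⟩) (hMge j ⟨x₀, hx₀mem⟩)
  have hMb : ∀ j, ∀ w ∈ s, ‖D j w‖ ≤ ‖w‖^k * M j := by
    intro j w hw
    by_cases hw0 : w = 0
    · rw [hw0, hD]
      simp only [hflat j, norm_zero]
      exact mul_nonneg (by positivity) (hM0 j)
    · have hwpos : 0 < ‖w‖ := norm_pos_iff.2 hw0
      have hwmem : w ∈ s \ {0} := ⟨hw, by simpa [mem_singleton_iff] using hw0⟩
      have := hMge j ⟨w, hwmem⟩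
      rw [hterm] at this
      simp only at this
      rw [hzpow ⟨w, hwmem⟩] at this
      calc ‖D j w‖ = ‖w‖^k * ((‖w‖^k)⁻¹ * ‖D j w‖) := by field_simp
        _ ≤ ‖w‖^k * M j := mul_le_mul_of_nonneg_left this (by positivity)
  have chain : ∀ j, M j ≤ r * M (j+1) := by
    intro j
    apply hMle
    intro y
    have hymem' := hymem y
    have hQ : ∀ w ∈ s, ‖w‖ ≤ ‖(y:E)‖ → ‖D (j+1) w‖ ≤ ‖(y:E)‖^k * M (j+1) := by
      intro w hw hwy
      exact (hMb (j+1) w hw).trans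
        (mul_le_mul_of_nonneg_right (by gcongr) (hM0 _))
    have hmv := meanValueZero hr hf j (hflat j) hymem'.1 hQ
    rw [hterm]
    simp only
    rw [hzpow y, inv_mul_le_iff₀ (pow_pos hymem'.2 k)]
    have hyr : ‖(y:E)‖ ≤ r := by
      have h2 : (y:E) ∈ closedBall (0:E) r := hymem'.1
      rwa [mem_closedBall_zero_iff (E := EuclideanSpace ℝ (Fin m))] at h2
    calc ‖D j y‖ ≤ ‖(y:E)‖^k * M (j+1) * ‖(y:E)‖ := hmv
      _ ≤ ‖(y:E)‖^k * M (j+1) * r := by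
          exact mul_le_mul_of_nonneg_left hyr (mul_nonneg (pow_nonneg hymem'.2.le _) (hM0 (j+1)))
      _ = ‖(y:E)‖^k * (r * M (j+1)) := by ring
  have chainpow : ∀ j i, M j ≤ r^i * M (j+i) := by
    intro j i
    induction i with
    | zero => simpa using le_refl (M j)
    | succ i ih =>
      calc M j ≤ r^i * M (j+i) := ih
        _ ≤ r^i * (r * M (j+i+1)) := by
            apply mul_le_mul_of_nonneg_left (chain (j+i)) (by positivity)
        _ = r^(i+1) * M (j+(i+1)) := by rw [show j+i+1 = j+(i+1) by omega]; ring
  -- one-step interpolation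
  have step : ∀ j, M (j+1) ≤ 9 * (Real.sqrt (M j) * Real.sqrt (M (j+2))) := by
    intro j
    by_cases hc0 : M (j+2) = 0
    · have h1 : M (j+1) ≤ r * M (j+2) := chain (j+1)
      rw [hc0] at h1
      have h2 : 0 ≤ 9 * (Real.sqrt (M j) * Real.sqrt (M (j+2))) := by positivity
      linarith
    have hcpos : 0 < M (j+2) := lt_of_le_of_ne (hM0 _) (Ne.symm hc0)
    by_cases ha0 : M j = 0
    · -- D j vanishes identically, hence D (j+1) vanishes
      have hDj0 : ∀ w ∈ s, D j w = 0 := by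
        intro w hw
        have := hMb j w hw
        rw [ha0, mul_zero] at this
        exact norm_le_zero_iff.1 this
      apply hMle
      intro y
      have hymem' := hymem y
      have : D (j+1) (y:E) = 0 := by
        have hEq : Set.EqOn (D j) 0 s := fun w hw => hDj0 w hw
        have h1 : fderivWithin ℝ (D j) s (y:E) = 0 := by
          rw [fderivWithin_congr hEq (hDj0 _ hymem'.1)]
          exact fderivWithin_const_apply _
        have h2 : ‖D (j+1) (y:E)‖ = ‖fderivWithin ℝ (D j) s (y:E)‖ :=
          (norm_fderivWithin_iteratedFDerivWithin).symm
        rw [h1] at h2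
        exact norm_eq_zero.1 (h2.trans ContinuousLinearMap.opNorm_zero)
      rw [hterm]
      simp only
      rw [this, norm_zero, mul_zero]
      positivity
    have hapos : 0 < M j := lt_of_le_of_ne (hM0 _) (Ne.symm ha0)
    set sa := Real.sqrt (M j) with hsa
    set sc := Real.sqrt (M (j+2)) with hsc
    have hsa0 : 0 < sa := Real.sqrt_pos.2 hapos
    have hsc0 : 0 < sc := Real.sqrt_pos.2 hcpos
    have hsa2 : sa^2 = M j := Real.sq_sqrt (hM0 _)
    have hsc2 : sc^2 = M (j+2) := Real.sq_sqrt (hM0 _)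
    set h₀ : ℝ := sa / sc with hh₀
    have hh₀pos : 0 < h₀ := by positivity
    apply hMle
    intro y
    have hymem' := hymem y
    by_cases hcase : h₀ ≤ ‖(y:E)‖
    · have hpb := pointBound hr hf k j (hM0 j) (hM0 (j+2)) (hMb j) (hMb (j+2))
        hymem'.1 hh₀pos hcase
      rw [hterm]
      simp only
      rw [hzpow y, inv_mul_le_iff₀ (pow_pos hymem'.2 k)]
      have heq : (6*(M j)/h₀ + 3*(h₀*(M (j+2)))) = 9 * (sa * sc) := by
        rw [hh₀, ← hsa2, ← hsc2]
        field_simp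
        ring
      calc ‖D (j+1) y‖ ≤ (6*(M j)/h₀ + 3*(h₀*(M (j+2)))) * ‖(y:E)‖^k := hpb
        _ = ‖(y:E)‖^k * (9 * (sa * sc)) := by rw [heq]; ring
    · push_neg at hcase
      have hQ : ∀ w ∈ s, ‖w‖ ≤ ‖(y:E)‖ → ‖D (j+2) w‖ ≤ ‖(y:E)‖^k * M (j+2) := by
        intro w hw hwy
        exact (hMb (j+2) w hw).trans
          (mul_le_mul_of_nonneg_right (pow_le_pow_left₀ (norm_nonneg _) hwy k) (hM0 _))
      have hmv := meanValueZero hr hf (j+1) (hflat (j+1)) hymem'.1 hQ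
      rw [hterm]
      simp only
      rw [hzpow y, inv_mul_le_iff₀ (pow_pos hymem'.2 k)]
      calc ‖D (j+1) y‖ ≤ ‖(y:E)‖^k * M (j+2) * ‖(y:E)‖ := hmv
        _ ≤ ‖(y:E)‖^k * M (j+2) * h₀ := by
            apply mul_le_mul_of_nonneg_left (le_of_lt hcase) (by positivity)
        _ = ‖(y:E)‖^k * (M (j+2) * h₀) := by ring
        _ ≤ ‖(y:E)‖^k * (9 * (sa * sc)) := by
            apply mul_le_mul_of_nonneg_left _ (by positivity)
            rw [hh₀, ← hsc2]
            rw [show sc^2 * (sa/sc) = sa * sc by field_simp]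
            nlinarith
  -- relations between flatNorm and M
  have hflatle : ∀ N : ℕ, flatNorm m r N k f ≤ (max 1 r)^N * M N := by
    intro N
    apply ciSup_le
    intro p
    have hje : (p.2 : ℕ) ≤ N := by omega
    have h1 : term p.2 p.1 ≤ M p.2 := hMge _ _
    have h2 : M (p.2 : ℕ) ≤ r^(N - p.2) * M ((p.2 : ℕ) + (N - p.2)) := chainpow _ _
    rw [show (p.2 : ℕ) + (N - (p.2:ℕ)) = N by omega] at h2
    have h3 : r^(N - (p.2:ℕ)) ≤ (max 1 r)^N := by
      calc r^(N - (p.2:ℕ)) ≤ (max 1 r)^(N - (p.2:ℕ)) :=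
            pow_le_pow_left₀ (le_of_lt hr) (le_max_right 1 r) _
        _ ≤ (max 1 r)^N := pow_le_pow_right₀ (le_max_left 1 r) (by omega)
    calc ‖(p.1 : E)‖ ^ (-(k : ℤ)) * ‖iteratedFDerivWithin ℝ p.2 f (closedBall 0 r) p.1‖
        = term p.2 p.1 := rfl
      _ ≤ r^(N - p.2) * M N := h1.trans h2
      _ ≤ (max 1 r)^N * M N := mul_le_mul_of_nonneg_right h3 (hM0 N)
  have hflatge : ∀ N j : ℕ, j ≤ N → M j ≤ flatNorm m r N k f := by
    intro N j hjN
    have hbddp : BddAbove (Set.range (fun p : ↥(s \ {0}) × Fin (N+1) => term p.2 p.1)) := by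
      refine ⟨∑ i ∈ Finset.range (N+1), S (i+k), ?_⟩
      rintro z ⟨p, rfl⟩
      calc term p.2 p.1 ≤ S ((p.2:ℕ)+k) := hterm_le _ _
        _ ≤ ∑ i ∈ Finset.range (N+1), S (i+k) := by
            apply Finset.single_le_sum (f := fun i => S (i+k)) (fun i _ => hS0 _)
            exact Finset.mem_range.2 p.2.isLt
    apply hMle
    intro y
    have := le_ciSup hbddp (⟨y, ⟨j, by omega⟩⟩ : ↥(s \ {0}) × Fin (N+1))
    exact this
  -- zero cases
  have hRHSnn : 0 ≤ (max 1 r)^n * Real.exp (Real.log 9 * (l₁*l₂)) *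
      flatNorm m r (n - l₁) k f ^ ((l₂ : ℝ) / ((l₁ : ℝ) + (l₂ : ℝ))) *
      flatNorm m r (n + l₂) k f ^ ((l₁ : ℝ) / ((l₁ : ℝ) + (l₂ : ℝ))) := by
    have hA : 0 ≤ flatNorm m r (n - l₁) k f := le_trans (hM0 _) (hflatge (n-l₁) (n-l₁) le_rfl)
    have hB : 0 ≤ flatNorm m r (n + l₂) k f := le_trans (hM0 _) (hflatge (n+l₂) (n+l₂) le_rfl)
    positivity
  by_cases hMs0 : M (n + l₂) = 0
  · have h1 : M n ≤ r^l₂ * M (n + l₂) := chainpow n l₂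
    rw [hMs0, mul_zero] at h1
    have h2 : flatNorm m r n k f ≤ (max 1 r)^n * M n := hflatle n
    have h3 : (max 1 r)^n * M n ≤ 0 := by
      apply mul_nonpos_of_nonneg_of_nonpos (by positivity) h1
    linarith
  by_cases hMp0 : M (n - l₁) = 0
  · have hzero : ∀ i, M ((n - l₁) + i) = 0 := by
      intro i
      induction i with
      | zero => simpa using hMp0
      | succ i ih =>
        have h1 := step ((n - l₁) + i)
        rw [show (n-l₁) + i + 1 = (n-l₁) + (i+1) by omega] at h1
        rw [ih] at h1
        rw [Real.sqrt_zero, zero_mul, mul_zero] at h1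
        exact le_antisymm h1 (hM0 _)
    have hMn0 : M n = 0 := by
      have := hzero l₁
      rwa [show (n - l₁) + l₁ = n by omega] at this
    have h2 : flatNorm m r n k f ≤ (max 1 r)^n * M n := hflatle n
    rw [hMn0, mul_zero] at h2
    linarith
  -- positive case
  have hMppos : 0 < M (n - l₁) := lt_of_le_of_ne (hM0 _) (Ne.symm hMp0)
  have hMspos : 0 < M (n + l₂) := lt_of_le_of_ne (hM0 _) (Ne.symm hMs0)
  have hpos : ∀ j, n - l₁ ≤ j → 0 < M j := by
    intro j hj
    have h1 := chainpow (n - l₁) (j - (n - l₁))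
    rw [show (n - l₁) + (j - (n - l₁)) = j by omega] at h1
    rcases lt_or_eq_of_le (hM0 j) with h | h
    · exact h
    · exfalso
      rw [← h, mul_zero] at h1
      linarith
  set d : ℕ → ℝ := fun j => Real.log (M j) + Real.log 9 * (j:ℝ)^2 with hd
  have hconv : ∀ j, n - l₁ ≤ j → j + 2 ≤ n + l₂ → 2 * d (j+1) ≤ d j + d (j+2) := by
    intro j hj1 hj2
    have hj0 : 0 < M j := hpos j hj1
    have hj1' : 0 < M (j+1) := hpos (j+1) (by omega)
    have hj2' : 0 < M (j+2) := hpos (j+2) (by omega)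
    have hlog := Real.log_le_log hj1' (step j)
    rw [Real.log_mul (by norm_num) (by positivity), Real.log_mul (by positivity) (by positivity),
      Real.log_sqrt (hM0 j), Real.log_sqrt (hM0 (j+2))] at hlog
    simp only [hd]
    push_cast
    nlinarith [hL9]
  have hcs := convexSeq d (n - l₁) n (n + l₂) (by omega) (by omega) hconv
  have hpc : (((n - l₁ : ℕ)) : ℝ) = (n:ℝ) - l₁ := by rw [Nat.cast_sub hl₁]
  have hsc : (((n + l₂ : ℕ)) : ℝ) = (n:ℝ) + l₂ := by push_cast; ring
  simp only [hd] at hcs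
  rw [hpc, hsc] at hcs
  -- clean up and conclude
  have htpos : (0:ℝ) < (l₁:ℝ) + l₂ := by
    have : (0:ℕ) < l₁ + l₂ := hl
    exact_mod_cast this
  set LA := Real.log (M (n - l₁)) with hLA
  set LB := Real.log (M n) with hLB
  set LC := Real.log (M (n + l₂)) with hLC
  have key2 : ((l₁:ℝ)+l₂) * LB ≤ (l₂:ℝ) * LA + (l₁:ℝ) * LC +
      Real.log 9 * ((l₁:ℝ)*(l₂:ℝ)*((l₁:ℝ)+(l₂:ℝ))) := by
    nlinarith [hcs]
  have hfinal : LB ≤ (l₂:ℝ)/((l₁:ℝ)+l₂) * LA + (l₁:ℝ)/((l₁:ℝ)+l₂) * LC +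
      Real.log 9 * ((l₁:ℝ)*(l₂:ℝ)) := by
    rw [div_mul_eq_mul_div, div_mul_eq_mul_div, ← mul_le_mul_iff_of_pos_left htpos]
    have hexpand : ((l₁:ℝ)+l₂) * ((l₂:ℝ) * LA / ((l₁:ℝ)+l₂) + (l₁:ℝ) * LC / ((l₁:ℝ)+l₂) +
        Real.log 9 * ((l₁:ℝ)*(l₂:ℝ))) =
        (l₂:ℝ) * LA + (l₁:ℝ) * LC + Real.log 9 * ((l₁:ℝ)*(l₂:ℝ)*((l₁:ℝ)+(l₂:ℝ))) := by
      field_simp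
    rw [hexpand]
    exact key2
  have hMnexp : M n ≤ Real.exp (Real.log 9 * ((l₁:ℝ)*(l₂:ℝ))) *
      (M (n - l₁)) ^ ((l₂ : ℝ) / ((l₁ : ℝ) + (l₂ : ℝ))) *
      (M (n + l₂)) ^ ((l₁ : ℝ) / ((l₁ : ℝ) + (l₂ : ℝ))) := by
    have h1 : M n = Real.exp LB := (Real.exp_log (hpos n (by omega))).symm
    have h2 : (M (n - l₁)) ^ ((l₂ : ℝ) / ((l₁ : ℝ) + (l₂ : ℝ))) =
        Real.exp (LA * ((l₂ : ℝ) / ((l₁ : ℝ) + (l₂ : ℝ)))) := by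
      rw [hLA, Real.rpow_def_of_pos hMppos]
    have h3 : (M (n + l₂)) ^ ((l₁ : ℝ) / ((l₁ : ℝ) + (l₂ : ℝ))) =
        Real.exp (LC * ((l₁ : ℝ) / ((l₁ : ℝ) + (l₂ : ℝ)))) := by
      rw [hLC, Real.rpow_def_of_pos hMspos]
    rw [h1, h2, h3, ← Real.exp_add, ← Real.exp_add]
    apply Real.exp_le_exp.2
    calc LB ≤ (l₂:ℝ)/((l₁:ℝ)+l₂) * LA + (l₁:ℝ)/((l₁:ℝ)+l₂) * LC +
        Real.log 9 * ((l₁:ℝ)*(l₂:ℝ)) := hfinal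
      _ = Real.log 9 * ((l₁:ℝ)*(l₂:ℝ)) + LA * ((l₂:ℝ)/((l₁:ℝ)+l₂)) +
          LC * ((l₁:ℝ)/((l₁:ℝ)+l₂)) := by ring
  -- final assembly
  have hA : M (n - l₁) ≤ flatNorm m r (n - l₁) k f := hflatge (n-l₁) (n-l₁) le_rfl
  have hB : M (n + l₂) ≤ flatNorm m r (n + l₂) k f := hflatge (n+l₂) (n+l₂) le_rfl
  have hrpA : (M (n - l₁)) ^ ((l₂ : ℝ) / ((l₁ : ℝ) + (l₂ : ℝ))) ≤
      (flatNorm m r (n - l₁) k f) ^ ((l₂ : ℝ) / ((l₁ : ℝ) + (l₂ : ℝ))) :=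
    Real.rpow_le_rpow (hM0 _) hA (by positivity)
  have hrpB : (M (n + l₂)) ^ ((l₁ : ℝ) / ((l₁ : ℝ) + (l₂ : ℝ))) ≤
      (flatNorm m r (n + l₂) k f) ^ ((l₁ : ℝ) / ((l₁ : ℝ) + (l₂ : ℝ))) :=
    Real.rpow_le_rpow (hM0 _) hB (by positivity)
  calc flatNorm m r n k f ≤ (max 1 r)^n * M n := hflatle n
    _ ≤ (max 1 r)^n * (Real.exp (Real.log 9 * ((l₁:ℝ)*(l₂:ℝ))) *
        (M (n - l₁)) ^ ((l₂ : ℝ) / ((l₁ : ℝ) + (l₂ : ℝ))) *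
        (M (n + l₂)) ^ ((l₁ : ℝ) / ((l₁ : ℝ) + (l₂ : ℝ)))) := by
        apply mul_le_mul_of_nonneg_left hMnexp (by positivity)
    _ ≤ (max 1 r)^n * (Real.exp (Real.log 9 * ((l₁:ℝ)*(l₂:ℝ))) *
        (flatNorm m r (n - l₁) k f) ^ ((l₂ : ℝ) / ((l₁ : ℝ) + (l₂ : ℝ))) *
        (flatNorm m r (n + l₂) k f) ^ ((l₁ : ℝ) / ((l₁ : ℝ) + (l₂ : ℝ)))) := by
        have hAnn : 0 ≤ flatNorm m r (n - l₁) k f := le_trans (hM0 _) hA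
        apply mul_le_mul_of_nonneg_left _ (by positivity)
        apply mul_le_mul (mul_le_mul_of_nonneg_left hrpA (Real.exp_pos _).le) hrpB
          (Real.rpow_nonneg (hM0 _) _)
          (mul_nonneg (Real.exp_pos _).le (Real.rpow_nonneg hAnn _))
    _ = (max 1 r)^n * Real.exp (Real.log 9 * (l₁*l₂)) *
        flatNorm m r (n - l₁) k f ^ ((l₂ : ℝ) / ((l₁ : ℝ) + (l₂ : ℝ))) *
        flatNorm m r (n + l₂) k f ^ ((l₁ : ℝ) / ((l₁ : ℝ) + (l₂ : ℝ))) := by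
        push_cast
        ring
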